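/- Let A be a simple selfadjoint operator and \delta a cyclic vector of A. The orthonormal basis \{\delta_k\} obtained by the Gram–Schmidt procedure applied to \{A^{k-1}\delta\}_{k=1}^\infty is a basis of representation for A if and only if the closed linear span of \{(A - iI) A^{k-1}\delta : k \in \mathbb{N}\} equals the whole Hilbert space. -/

import Mathlib

open scoped InnerProductSpace
open LinearPMap

section Aux

variable {H : Type*} [NormedAddCommGroup H] [InnerProductSpace ℂ H] [CompleteSpace H]

/-- triangular change of basis -/
lemma stmt4aux_tri {M : Type*} [AddCommGroup M] [Module ℂ M] (u e : ℕ → M) (c : ℕ → ℕ → ℂ)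
    (hc : ∀ k, c k k ≠ 0)
    (he : ∀ k, e k = ∑ j ∈ Finset.range (k + 1), c k j • u j) :
    ∀ k, u k ∈ Submodule.span ℂ (Set.range e) := by
  intro k
  induction k using Nat.strong_induction_on with
  | _ k ih =>
    have h1 : c k k • u k = e k - ∑ j ∈ Finset.range k, c k j • u j := by
      rw [he k, Finset.sum_range_succ]; abel
    have h2 : u k = (c k k)⁻¹ • (c k k • u k) := by
      rw [smul_smul, inv_mul_cancel₀ (hc k), one_smul]
    rw [h2, h1]
    refine Submodule.smul_mem _ _ (Submodule.sub_mem _ (Submodule.subset_span ⟨k, rfl⟩) ?_)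
    exact Submodule.sum_mem _ fun j hj =>
      Submodule.smul_mem _ _ (ih j (Finset.mem_range.mp hj))

lemma stmt4aux_adjoint_graph_eq (T : H →ₗ.[ℂ] H) (hT : Dense (T.domain : Set H)) :
    (T.adjoint.graph : Set (H × H)) =
      ⋂ x : T.domain, {p : H × H | ⟪p.2, (x : H)⟫_ℂ = ⟪p.1, T x⟫_ℂ} := by
  ext p
  simp only [Set.mem_iInter, Set.mem_setOf_eq, SetLike.mem_coe]
  constructor
  · intro hp x
    rw [LinearPMap.mem_graph_iff] at hp
    obtain ⟨y, hy1, hy2⟩ := hp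
    rw [← hy1, ← hy2]
    exact LinearPMap.adjoint_isFormalAdjoint hT y x
  · intro h
    have hdom : p.1 ∈ T.adjoint.domain :=
      LinearPMap.mem_adjoint_domain_of_exists _ ⟨p.2, h⟩
    have happ : T.adjoint ⟨p.1, hdom⟩ = p.2 :=
      LinearPMap.adjoint_apply_eq hT _ fun x => h x
    rw [LinearPMap.mem_graph_iff]
    exact ⟨⟨p.1, hdom⟩, rfl, happ⟩

lemma stmt4aux_adjoint_graph_closed (T : H →ₗ.[ℂ] H) (hT : Dense (T.domain : Set H)) :
    IsClosed (T.adjoint.graph : Set (H × H)) := by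
  rw [stmt4aux_adjoint_graph_eq T hT]
  exact isClosed_iInter fun x =>
    isClosed_eq (continuous_snd.inner continuous_const) (continuous_fst.inner continuous_const)

/-- the map `p ↦ p.2 - I • p.1`. -/
noncomputable def stmt4aux_L : (H × H) →ₗ[ℂ] H :=
  LinearMap.snd ℂ H H - Complex.I • LinearMap.fst ℂ H H

lemma stmt4aux_L_apply (p : H × H) : stmt4aux_L p = p.2 - Complex.I • p.1 := rfl

lemma stmt4aux_L_cont : Continuous (stmt4aux_L : H × H → H) := by
  exact (continuous_snd.sub (continuous_fst.const_smul Complex.I) : Continuous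
      fun p : H × H => p.2 - Complex.I • p.1).congr fun p => (stmt4aux_L_apply p).symm

lemma stmt4aux_norm_sq (x y : H) (h : (⟪y, x⟫_ℂ).im = 0) :
    ‖y - Complex.I • x‖ ^ 2 = ‖y‖ ^ 2 + ‖x‖ ^ 2 := by
  have h1 : ‖y - Complex.I • x‖ ^ 2 =
      ‖y‖ ^ 2 - 2 * Complex.re ⟪y, Complex.I • x⟫_ℂ + ‖Complex.I • x‖ ^ 2 :=
    @norm_sub_sq ℂ _ _ _ _ y (Complex.I • x)
  have h2 : ⟪y, Complex.I • x⟫_ℂ = Complex.I * ⟪y, x⟫_ℂ := inner_smul_right _ _ _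
  have h3 : Complex.re (Complex.I * ⟪y, x⟫_ℂ) = -(⟪y, x⟫_ℂ).im := by
    simp [Complex.mul_re]
  have h4 : ‖Complex.I • x‖ = ‖x‖ := by
    rw [norm_smul, Complex.norm_I, one_mul]
  rw [h1, h2, h3, h, h4]; ring

end Aux

set_option linter.unusedSectionVars false

section Aux2

variable {H : Type*} [NormedAddCommGroup H] [InnerProductSpace ℂ H] [CompleteSpace H]

lemma stmt4aux_closed_image (m : Submodule ℂ (H × H)) (hm : IsClosed (m : Set (H × H)))
    (hb : ∀ p ∈ m, ‖p‖ ≤ ‖(stmt4aux_L p : H)‖) :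
    IsClosed ((m.map stmt4aux_L : Submodule ℂ H) : Set H) := by
  apply IsSeqClosed.isClosed
  intro x y hx hy
  have hx' : ∀ n, ∃ p ∈ m, stmt4aux_L p = x n := fun n => Submodule.mem_map.mp (hx n)
  choose p hp hLp using hx'
  have hcx : CauchySeq x := hy.cauchySeq
  have hcp : CauchySeq p := by
    rw [Metric.cauchySeq_iff] at hcx ⊢
    intro ε hε
    obtain ⟨N, hN⟩ := hcx ε hε
    refine ⟨N, fun a ha b2 hb2 => ?_⟩
    have h2 : ‖p a - p b2‖ ≤ ‖stmt4aux_L (p a - p b2)‖ := hb _ (m.sub_mem (hp a) (hp b2))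
    have h3 : stmt4aux_L (p a - p b2) = x a - x b2 := by rw [_root_.map_sub, hLp a, hLp b2]
    rw [h3] at h2
    calc dist (p a) (p b2) = ‖p a - p b2‖ := dist_eq_norm _ _
      _ ≤ ‖x a - x b2‖ := h2
      _ = dist (x a) (x b2) := (dist_eq_norm _ _).symm
      _ < ε := hN a ha b2 hb2
  obtain ⟨q, hq⟩ := cauchySeq_tendsto_of_complete hcp
  have hqm : q ∈ m := hm.mem_of_tendsto hq (Filter.Eventually.of_forall hp)
  have hLt : Filter.Tendsto (fun n => stmt4aux_L (p n)) Filter.atTop (nhds (stmt4aux_L q)) :=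
    ((stmt4aux_L_cont (H := H)).tendsto q).comp hq
  have hxy : Filter.Tendsto x Filter.atTop (nhds (stmt4aux_L q)) := by
    simpa only [hLp] using hLt
  have : y = stmt4aux_L q := tendsto_nhds_unique hy hxy
  exact this ▸ Submodule.mem_map.mpr ⟨q, hqm, rfl⟩

lemma stmt4aux_surj (A : H →ₗ.[ℂ] H)
    (hclosed : IsClosed (A.graph : Set (H × H)))
    (hgr : ∀ p : H × H, p ∈ A.graph ↔ ∀ x : A.domain, ⟪p.2, (x : H)⟫_ℂ = ⟪p.1, A x⟫_ℂ)
    (hb : ∀ p ∈ A.graph, ‖p‖ ≤ ‖stmt4aux_L p‖) :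
    ∀ y : H, ∃ p ∈ A.graph, stmt4aux_L p = y := by
  set R := A.graph.map stmt4aux_L with hR
  have hRclosed : IsClosed (R : Set H) := stmt4aux_closed_image _ hclosed hb
  haveI : CompleteSpace R := hRclosed.completeSpace_coe
  have hbot : Rᗮ = ⊥ := by
    rw [Submodule.eq_bot_iff]
    intro y hy
    have hmem : (y, -(Complex.I • y)) ∈ A.graph := by
      rw [hgr]
      intro x
      have h0 : ⟪A x - Complex.I • (x : H), y⟫_ℂ = 0 := by
        apply (Submodule.mem_orthogonal R y).mp hy
        exact Submodule.mem_map.mpr ⟨((x : H), A x), A.mem_graph x, rfl⟩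
      have h1 : ⟪A x, y⟫_ℂ = -(Complex.I * ⟪(x : H), y⟫_ℂ) := by
        rw [inner_sub_left, inner_smul_left, Complex.conj_I] at h0
        linear_combination h0
      have h2 : ⟪y, A x⟫_ℂ = Complex.I * ⟪y, (x : H)⟫_ℂ := by
        rw [← inner_conj_symm, h1, _root_.map_neg, _root_.map_mul, Complex.conj_I, inner_conj_symm]
        ring
      rw [h2, inner_neg_left, inner_smul_left, Complex.conj_I]
      ring
    have hydom : y ∈ A.domain := LinearPMap.mem_domain_of_mem_graph hmem
    have hsym0 := (hgr (y, -(Complex.I • y))).mp hmem ⟨y, hydom⟩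
    have hAy : -(Complex.I • y) = A ⟨y, hydom⟩ := (LinearPMap.image_iff hydom).mpr hmem
    rw [← hAy] at hsym0
    have hsym : ⟪-(Complex.I • y), y⟫_ℂ = ⟪y, -(Complex.I • y)⟫_ℂ := by
      simpa using hsym0
    have hinner : ⟪y, y⟫_ℂ = 0 := by
      rw [inner_neg_left, inner_neg_right, inner_smul_left, inner_smul_right,
        Complex.conj_I] at hsym
      have h2I : (2 * Complex.I) * ⟪y, y⟫_ℂ = 0 := by linear_combination hsym
      rcases mul_eq_zero.mp h2I with h | h
      · exact absurd h (by norm_num [Complex.ext_iff])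
      · exact h
    exact inner_self_eq_zero.mp hinner
  have hR : R = ⊤ := Submodule.orthogonal_eq_bot_iff.mp hbot
  intro y
  have hyR : y ∈ R := by rw [hR]; trivial
  obtain ⟨p, hp, hLp⟩ := Submodule.mem_map.mp hyR
  exact ⟨p, hp, hLp⟩

end Aux2

/-- An orthonormal basis `e` of the Hilbert space `H` is a *basis of representation*
for a (closed) operator `A` when (a) each `e k` lies in the domain of `A`, and
(b) any closed operator `B` agreeing with `A` on all the `e k` extends `A`. -/
def IsBasisOfRepresentation {H : Type*} [NormedAddCommGroup H]
    [InnerProductSpace ℂ H] (A : H →ₗ.[ℂ] H) (e : ℕ → H) : Prop :=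
  Orthonormal ℂ e ∧ Dense (↑(Submodule.span ℂ (Set.range e)) : Set H) ∧
  (∀ k, e k ∈ A.domain) ∧
  ∀ B : H →ₗ.[ℂ] H, IsClosed (B.graph : Set (H × H)) →
    (∀ k y, (e k, y) ∈ A.graph → (e k, y) ∈ B.graph) → A ≤ B

theorem stmt4 {H : Type*} [NormedAddCommGroup H] [InnerProductSpace ℂ H]
    [CompleteSpace H]
    (A : H →ₗ.[ℂ] H) (hA : IsSelfAdjoint A)
    (δ : H) (v : ℕ → H) (hv0 : v 0 = δ) (hv : ∀ k, (v k, v (k + 1)) ∈ A.graph)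
    (hcyc : Dense (↑(Submodule.span ℂ (Set.range v)) : Set H))
    (P : ℕ → Polynomial ℝ) (hdeg : ∀ k, (P k).natDegree = k)
    (hlead : ∀ k, 0 < (P k).leadingCoeff)
    (δs : ℕ → H)
    (hδs : ∀ k, δs k = ∑ j ∈ Finset.range (k + 1), ((P k).coeff j : ℂ) • v j)
    (hON : Orthonormal ℂ δs) :
    IsBasisOfRepresentation A δs ↔
      Dense (↑(Submodule.span ℂ
        (Set.range fun k : ℕ => v (k + 1) - Complex.I • v k)) : Set H) := by
  classical
  have hAeq : A.adjoint = A := hA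
  have hdense : Dense (A.domain : Set H) := hA.dense_domain
  have hAclosed : IsClosed (A.graph : Set (H × H)) := by
    rw [← hAeq]; exact stmt4aux_adjoint_graph_closed A hdense
  have hgr : ∀ p : H × H, p ∈ A.graph ↔
      ∀ x : A.domain, ⟪p.2, (x : H)⟫_ℂ = ⟪p.1, A x⟫_ℂ := by
    intro p
    have h := stmt4aux_adjoint_graph_eq A hdense
    rw [hAeq] at h
    constructor
    · intro hp x
      have hp' : p ∈ (A.graph : Set (H × H)) := hp
      rw [h] at hp'
      exact Set.mem_iInter.mp hp' x
    · intro hp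
      have hp' : p ∈ (A.graph : Set (H × H)) := by
        rw [h]; exact Set.mem_iInter.mpr hp
      exact hp'
  have him : ∀ p ∈ A.graph, (⟪p.2, p.1⟫_ℂ).im = 0 := by
    intro p hp
    obtain ⟨x, hx1, hx2⟩ := A.mem_graph_iff.mp hp
    have h := (hgr p).mp hp x
    rw [hx1, hx2] at h
    have h2 : (starRingEnd ℂ) ⟪p.2, p.1⟫_ℂ = ⟪p.1, p.2⟫_ℂ := inner_conj_symm _ _
    have h3 : (starRingEnd ℂ) ⟪p.2, p.1⟫_ℂ = ⟪p.2, p.1⟫_ℂ := h2.trans h.symm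
    exact Complex.conj_eq_iff_im.mp h3
  have hb : ∀ p ∈ A.graph, ‖p‖ ≤ ‖stmt4aux_L p‖ := by
    intro p hp
    have h2 := stmt4aux_norm_sq p.1 p.2 (him p hp)
    rw [← stmt4aux_L_apply] at h2
    have hn1 : ‖p.1‖ ≤ ‖stmt4aux_L p‖ := by
      nlinarith [norm_nonneg p.1, norm_nonneg (stmt4aux_L p), norm_nonneg p.2]
    have hn2 : ‖p.2‖ ≤ ‖stmt4aux_L p‖ := by
      nlinarith [norm_nonneg p.1, norm_nonneg (stmt4aux_L p), norm_nonneg p.2]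
    rw [Prod.norm_def]
    exact max_le hn1 hn2
  -- matrix of coefficients
  set c : ℕ → ℕ → ℂ := fun k j => ((P k).coeff j : ℂ) with hcdef
  have hckk : ∀ k, c k k ≠ 0 := by
    intro k
    have h1 : (P k).coeff k = (P k).leadingCoeff := by
      rw [Polynomial.leadingCoeff, hdeg k]
    show ((P k).coeff k : ℂ) ≠ 0
    rw [h1]
    exact Complex.ofReal_ne_zero.mpr (hlead k).ne'
  set u : ℕ → H × H := fun k => (v k, v (k + 1)) with hudef
  have huA : ∀ k, u k ∈ A.graph := hv
  set e : ℕ → H × H := fun k => ∑ j ∈ Finset.range (k + 1), c k j • u j with hedef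
  have heA : ∀ k, e k ∈ A.graph := fun k =>
    Submodule.sum_mem _ fun j _ => Submodule.smul_mem _ _ (huA j)
  have hefst : ∀ k, (e k).1 = δs k := by
    intro k
    have h1 : (e k).1 = (LinearMap.fst ℂ H H) (e k) := rfl
    rw [h1, hedef]
    simp only [map_sum, LinearMap.map_smul, LinearMap.fst_apply]
    rw [hδs k]
  -- spans
  have hv_span : ∀ k, v k ∈ Submodule.span ℂ (Set.range δs) :=
    stmt4aux_tri v δs c hckk (fun k => hδs k)
  have hδspan_le : Submodule.span ℂ (Set.range v) ≤ Submodule.span ℂ (Set.range δs) :=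
    Submodule.span_le.mpr (by rintro _ ⟨k, rfl⟩; exact hv_span k)
  have hδdense : Dense (↑(Submodule.span ℂ (Set.range δs)) : Set H) :=
    hcyc.mono hδspan_le
  set g : Submodule ℂ (H × H) := Submodule.span ℂ (Set.range u) with hgdef
  have hgA : g ≤ A.graph :=
    Submodule.span_le.mpr (by rintro _ ⟨k, rfl⟩; exact huA k)
  have hgcA : g.topologicalClosure ≤ A.graph :=
    Submodule.topologicalClosure_minimal g hgA hAclosed
  have heg : ∀ k, e k ∈ g := fun k =>
    Submodule.sum_mem _ fun j _ => Submodule.smul_mem _ _ (Submodule.subset_span ⟨j, rfl⟩)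
  have hmapg : Submodule.map stmt4aux_L g =
      Submodule.span ℂ (Set.range fun k : ℕ => v (k + 1) - Complex.I • v k) := by
    have hfun : (⇑stmt4aux_L ∘ u : ℕ → H) = fun k => v (k + 1) - Complex.I • v k := by
      funext k
      simp [stmt4aux_L_apply, hudef]
    rw [hgdef, Submodule.map_span, ← Set.range_comp, hfun]
  constructor
  · -- forward direction
    rintro ⟨-, -, -, hmain⟩
    have hg0 : ∀ x : H × H, x ∈ g.topologicalClosure → x.1 = 0 → x.2 = 0 :=
      fun x hx h1 => A.graph_fst_eq_zero_snd (hgcA hx) h1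
    set B := (g.topologicalClosure).toLinearPMap with hBdef
    have hBgraph : B.graph = g.topologicalClosure :=
      Submodule.toLinearPMap_graph_eq _ hg0
    have hBclosed : IsClosed (B.graph : Set (H × H)) := by
      rw [hBgraph]
      exact g.isClosed_topologicalClosure
    have hag : ∀ k y, (δs k, y) ∈ A.graph → (δs k, y) ∈ B.graph := by
      intro k y hy
      have h1 : ((e k).1, (e k).2) ∈ A.graph := by rw [Prod.mk.eta]; exact heA k
      rw [hefst k] at h1
      have h2 : y = (e k).2 := A.mem_graph_snd_inj hy h1 rfl
      rw [h2, hBgraph, ← hefst k, Prod.mk.eta]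
      exact Submodule.le_topologicalClosure g (heg k)
    have hle := hmain B hBclosed hag
    have hAg : A.graph ≤ g.topologicalClosure := by
      rw [← hBgraph]; exact LinearPMap.le_graph_of_le hle
    intro y
    obtain ⟨p, hp, hLp⟩ := stmt4aux_surj A hAclosed hgr hb y
    have hpg : p ∈ closure (g : Set (H × H)) := hAg hp
    have h2 : stmt4aux_L p ∈ closure (stmt4aux_L '' (g : Set (H × H))) :=
      image_closure_subset_closure_image stmt4aux_L_cont (Set.mem_image_of_mem _ hpg)
    have himg : stmt4aux_L '' (g : Set (H × H)) =
        ((Submodule.map stmt4aux_L g : Submodule ℂ H) : Set H) := by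
      rw [Submodule.map_coe]
    rw [himg, hmapg] at h2
    rw [← hLp]
    exact h2
  · -- backward direction
    intro hDense
    refine ⟨hON, hδdense, ?_, ?_⟩
    · intro k
      rw [hδs k]
      exact Submodule.sum_mem _ fun j _ =>
        Submodule.smul_mem _ _ (LinearPMap.mem_domain_of_mem_graph (hv j))
    · intro B hBcl hag
      have heB : ∀ k, e k ∈ B.graph := by
        intro k
        have h1 : (δs k, (e k).2) ∈ A.graph := by
          rw [← hefst k, Prod.mk.eta]; exact heA k
        have h2 := hag k _ h1
        rwa [← hefst k, Prod.mk.eta] at h2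
      have huB : ∀ k, u k ∈ B.graph := by
        intro k
        have h := stmt4aux_tri u e c hckk (fun k => rfl) k
        refine Submodule.span_le.mpr ?_ h
        rintro _ ⟨j, rfl⟩; exact heB j
      have hgB : g ≤ B.graph :=
        Submodule.span_le.mpr (by rintro _ ⟨k, rfl⟩; exact huB k)
      have hgcB : g.topologicalClosure ≤ B.graph :=
        Submodule.topologicalClosure_minimal g hgB hBcl
      have hbar : ∀ p ∈ g.topologicalClosure, ‖p‖ ≤ ‖stmt4aux_L p‖ :=
        fun p hp => hb p (hgcA hp)
      have hclosedIm : IsClosed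
          ((Submodule.map stmt4aux_L g.topologicalClosure : Submodule ℂ H) : Set H) :=
        stmt4aux_closed_image _ g.isClosed_topologicalClosure hbar
      have hdenseIm : Dense
          ((Submodule.map stmt4aux_L g.topologicalClosure : Submodule ℂ H) : Set H) := by
        refine hDense.mono ?_
        rw [← hmapg]
        exact SetLike.coe_subset_coe.mpr
          (Submodule.map_mono (Submodule.le_topologicalClosure g))
      have hIm_top : ∀ y : H, y ∈ Submodule.map stmt4aux_L g.topologicalClosure := by
        intro y
        have h1 := hdenseIm.closure_eq
        rw [hclosedIm.closure_eq] at h1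
        have : y ∈ ((Submodule.map stmt4aux_L g.topologicalClosure : Submodule ℂ H) : Set H) := by
          rw [h1]; trivial
        exact this
      apply LinearPMap.le_of_le_graph
      intro p hp
      refine hgcB ?_
      obtain ⟨q, hq, hLq⟩ := Submodule.mem_map.mp (hIm_top (stmt4aux_L p))
      have hpq : p - q ∈ A.graph := A.graph.sub_mem hp (hgcA hq)
      have h0 : stmt4aux_L (p - q) = 0 := by rw [_root_.map_sub, hLq, sub_self]
      have hle0 : ‖p - q‖ ≤ 0 := by
        have := hb _ hpq; rwa [h0, norm_zero] at this
      have hpq0 : p = q := sub_eq_zero.mp (norm_le_zero_iff.mp hle0)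
      rw [hpq0]; exact hq
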